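/- arXiv:2208.11093 — 4 statements merged into one kernel-verified Lean document; each statement's English description precedes it below -/
import Mathlib

section
/- For p, k > 0, the p-k Nielsen beta function ₚβₖ(x) = (p/k) ∫₀^∞ e^{-xt/k}/(1 + e^{-t}) dt is completely monotonic on (0, ∞): for every n ≥ 0 and x > 0, (−1)ⁿ ₚβₖ⁽ⁿ⁾(x) ≥ 0. -/
open MeasureTheory Real Set Metric

noncomputable def pkBeta (p k x : ℝ) : ℝ :=
  (p / k) * ∫ t in Set.Ioi (0:ℝ), Real.exp (-(x * t) / k) / (1 + Real.exp (-t))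

namespace PkAux

variable {k : ℝ}

/-- integrand -/
noncomputable def g (k : ℝ) (n : ℕ) (x t : ℝ) : ℝ :=
  t ^ n * Real.exp (-(x * t) / k) / (1 + Real.exp (-t))

lemma g_nonneg (n : ℕ) {x t : ℝ} (ht : 0 ≤ t) : 0 ≤ g k n x t := by
  unfold g
  positivity

lemma one_le_denom (t : ℝ) : (1:ℝ) ≤ 1 + Real.exp (-t) := by
  nlinarith [Real.exp_pos (-t)]

lemma integrable_pow_exp (n : ℕ) {b : ℝ} (hb : 0 < b) :
    IntegrableOn (fun t : ℝ => t ^ n * Real.exp (-b * t)) (Ioi 0) := by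
  have h := integrableOn_rpow_mul_exp_neg_mul_rpow (p := 1) (s := (n:ℝ))
    (by exact lt_of_lt_of_le (by norm_num) (Nat.cast_nonneg n)) one_pos hb
  refine h.congr_fun (fun t ht => ?_) measurableSet_Ioi
  dsimp only
  rw [Real.rpow_one, Real.rpow_natCast]

lemma g_meas (n : ℕ) (x : ℝ) : AEStronglyMeasurable (g k n x)
    (volume.restrict (Ioi 0)) := by
  apply Measurable.aestronglyMeasurable
  unfold g
  fun_prop

lemma g_le (hk : 0 < k) (n : ℕ) {x t : ℝ} (ht : 0 < t) (hx : 0 ≤ x) :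
    ‖g k n x t‖ ≤ t ^ n * Real.exp (-(x / k) * t) := by
  rw [Real.norm_of_nonneg (g_nonneg n ht.le)]
  unfold g
  rw [div_le_iff₀ (by positivity : (0:ℝ) < 1 + Real.exp (-t))]
  have : -(x * t) / k = -(x / k) * t := by ring
  rw [this]
  nlinarith [Real.exp_pos (-t), Real.exp_pos (-(x/k)*t), pow_nonneg ht.le n,
    mul_nonneg (pow_nonneg ht.le n) (Real.exp_pos (-(x/k)*t)).le]

lemma g_integrable (hk : 0 < k) (n : ℕ) {x : ℝ} (hx : 0 < x) :
    IntegrableOn (g k n x) (Ioi 0) := by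
  refine (integrable_pow_exp n (b := x / k) (by positivity)).mono' (g_meas n x) ?_
  filter_upwards [ae_restrict_mem measurableSet_Ioi] with t ht
  exact g_le hk n ht hx.le

lemma hasDerivAt_integral (hk : 0 < k) (n : ℕ) {x : ℝ} (hx : 0 < x) :
    HasDerivAt (fun y => ∫ t in Ioi (0:ℝ), g k n y t)
      (-(1/k) * ∫ t in Ioi (0:ℝ), g k (n+1) x t) x := by
  set ε := x / 2 with hε
  have hεpos : 0 < ε := by positivity
  have h := hasDerivAt_integral_of_dominated_loc_of_deriv_le (μ := volume.restrict (Ioi 0))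
    (F := fun y t => g k n y t) (F' := fun y t => -(1/k) * g k (n+1) y t)
    (bound := fun t => (1/k) * (t ^ (n+1) * Real.exp (-(x/(2*k)) * t)))
    (x₀ := x) (ball_mem_nhds x hεpos)
    (Filter.Eventually.of_forall fun y => g_meas n y)
    (g_integrable hk n hx)
    ((g_meas (n+1) x).const_mul _)
    ?_ ?_ ?_
  · rw [← integral_const_mul]
    exact h.2
  · -- bound
    filter_upwards [ae_restrict_mem measurableSet_Ioi] with t ht y hy
    simp only [Set.mem_Ioi] at ht
    have hy2 : x / 2 ≤ y := by
      have := abs_lt.mp (mem_ball_iff_norm.mp hy)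
      linarith [this.1]
    have hypos : 0 < y := lt_of_lt_of_le (by linarith) hy2
    rw [norm_mul]
    have h1 : ‖g k (n+1) y t‖ ≤ t ^ (n+1) * Real.exp (-(y / k) * t) :=
      g_le hk (n+1) ht hypos.le
    have h2 : Real.exp (-(y / k) * t) ≤ Real.exp (-(x/(2*k)) * t) := by
      apply Real.exp_le_exp.mpr
      have h4 : x / (2*k) ≤ y / k := by
        rw [div_le_div_iff₀ (by positivity) hk]
        nlinarith
      nlinarith [mul_le_mul_of_nonneg_right h4 ht.le]
    have h3 : ‖(-(1/k) : ℝ)‖ = 1/k := by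
      rw [norm_neg, Real.norm_of_nonneg (by positivity)]
    rw [h3]
    exact mul_le_mul_of_nonneg_left (h1.trans
      (mul_le_mul_of_nonneg_left h2 (pow_nonneg ht.le _))) (by positivity)
  · exact ((integrable_pow_exp (n+1) (b := x/(2*k)) (by positivity)).const_mul _)
  · -- differentiability
    filter_upwards [ae_restrict_mem measurableSet_Ioi] with t ht y hy
    simp only [Set.mem_Ioi] at ht
    have hne : (1:ℝ) + Real.exp (-t) ≠ 0 := by positivity
    have h1 : HasDerivAt (fun y : ℝ => -(y * t) / k) (-(t/k)) y := by
      have : HasDerivAt (fun y : ℝ => -(y * t) / k) ((-t)/k) y := by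
        simpa using ((hasDerivAt_id y).mul_const t).neg.div_const k
      simpa [neg_div] using this
    have h2 := (h1.exp).const_mul (t ^ n / (1 + Real.exp (-t)))
    have he : (fun y : ℝ => g k n y t)
        = fun y => t ^ n / (1 + Real.exp (-t)) * Real.exp (-(y * t) / k) := by
      funext y; unfold g; ring
    rw [he]
    refine h2.congr_deriv ?_
    unfold g
    field_simp
    ring
  
end PkAux

theorem pkBeta_completelyMonotonic (p k : ℝ) (hp : 0 < p) (hk : 0 < k)
    (n : ℕ) (x : ℝ) (hx : 0 < x) :
    0 ≤ (-1 : ℝ) ^ n * iteratedDeriv n (pkBeta p k) x := by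
  open PkAux in
  have key : ∀ n : ℕ, ∀ x : ℝ, 0 < x →
      iteratedDeriv n (pkBeta p k) x
        = (p / k) * (-(1/k)) ^ n * ∫ t in Ioi (0:ℝ), g k n x t := by
    intro n
    induction n with
    | zero =>
      intro x hx
      simp only [iteratedDeriv_zero, pow_zero, mul_one, pkBeta]
      congr 1
      refine setIntegral_congr_fun measurableSet_Ioi fun t ht => ?_
      simp [g]
    | succ m ih =>
      intro x hx
      rw [iteratedDeriv_succ]
      have heq : Set.EqOn (iteratedDeriv m (pkBeta p k))
          (fun y => (p / k) * (-(1/k)) ^ m * ∫ t in Ioi (0:ℝ), g k m y t) (Ioi 0) :=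
        fun y hy => ih y hy
      have hd := (hasDerivAt_integral hk m hx).const_mul ((p / k) * (-(1/k)) ^ m)
      have : deriv (iteratedDeriv m (pkBeta p k)) x
          = deriv (fun y => (p / k) * (-(1/k)) ^ m * ∫ t in Ioi (0:ℝ), g k m y t) x := by
        apply Filter.EventuallyEq.deriv_eq
        filter_upwards [Ioi_mem_nhds hx] with y hy using heq hy
      rw [this, hd.deriv]
      ring
  rw [key n x hx]
  have hI : 0 ≤ ∫ t in Ioi (0:ℝ), g k n x t := by
    apply setIntegral_nonneg measurableSet_Ioi
    intro t ht
    exact g_nonneg n (le_of_lt ht)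
  have : (-1 : ℝ) ^ n * ((p / k) * (-(1/k)) ^ n) = (p / k) * (1/k) ^ n := by
    rw [neg_pow (1/k) n, show (-1:ℝ)^n * ((p/k) * ((-1)^n * (1/k)^n))
        = (p/k)*(1/k)^n * ((-1)^n*(-1)^n) by ring, ← pow_add, ← two_mul, pow_mul]
    norm_num
  rw [← mul_assoc, this]
  positivity
end

section
/- For n ∈ ℕ₀, p, k > 0, define Δₙ(x) = (x^{n+1}/n!) · |ₚβₖ⁽ⁿ⁾(x)| where |ₚβₖ⁽ⁿ⁾(x)| = (−1)ⁿ ₚβₖ⁽ⁿ⁾(x). Then lim_{x→0⁺} Δₙ(x) = p. -/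
open MeasureTheory Real Filter

noncomputable def Fk (k : ℝ) (n : ℕ) (x : ℝ) : ℝ :=
  ∫ t in Set.Ioi (0:ℝ), t ^ n * Real.exp (-(x * t) / k) / (1 + Real.exp (-t))

lemma intg_pow_exp {b : ℝ} (hb : 0 < b) (n : ℕ) :
    IntegrableOn (fun t : ℝ => t ^ n * Real.exp (-(b * t))) (Set.Ioi 0) := by
  have h := integrableOn_rpow_mul_exp_neg_mul_rpow (s := (n:ℝ)) (p := 1)
    (lt_of_lt_of_le neg_one_lt_zero (Nat.cast_nonneg n)) zero_lt_one hb
  refine h.congr_fun (fun t ht => ?_) measurableSet_Ioi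
  beta_reduce
  rw [Real.rpow_one, Real.rpow_natCast, neg_mul]

lemma integral_pow_exp {b : ℝ} (hb : 0 < b) (n : ℕ) :
    ∫ t in Set.Ioi (0:ℝ), t ^ n * Real.exp (-(b * t)) = (n.factorial : ℝ) / b ^ (n+1) := by
  have h := Real.integral_rpow_mul_exp_neg_mul_Ioi (a := (n:ℝ)+1) (r := b) (by positivity) hb
  rw [show ((n:ℝ)+1-1) = (n:ℝ) by ring] at h
  rw [show ((n:ℝ)+1) = ((n+1 : ℕ) : ℝ) by push_cast; ring] at h
  rw [Real.rpow_natCast, show (((n+1:ℕ)):ℝ) = (n:ℝ)+1 by push_cast; ring,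
    Real.Gamma_nat_eq_factorial] at h
  rw [show (∫ t in Set.Ioi (0:ℝ), t ^ n * Real.exp (-(b * t)))
      = ∫ t in Set.Ioi (0:ℝ), t ^ (n:ℝ) * Real.exp (-(b * t)) from
    setIntegral_congr_fun measurableSet_Ioi fun t ht => by
      rw [Real.rpow_natCast]]
  rw [h, one_div, inv_pow, div_eq_mul_inv, mul_comm]

open MeasureTheory Real Filter

lemma cont_aux (n : ℕ) (x k : ℝ) :
    Continuous (fun t : ℝ => t ^ n * Real.exp (-(x * t) / k) / (1 + Real.exp (-t))) := by
  refine Continuous.div (by fun_prop) (by fun_prop) fun t => ?_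
  positivity

lemma intg_Fk {k : ℝ} (hk : 0 < k) (n : ℕ) {x : ℝ} (hx : 0 < x) :
    IntegrableOn (fun t : ℝ => t ^ n * Real.exp (-(x * t) / k) / (1 + Real.exp (-t)))
      (Set.Ioi 0) := by
  refine (intg_pow_exp (b := x / k) (by positivity) n).mono'
    ((cont_aux n x k).aestronglyMeasurable.restrict) ?_
  refine (ae_restrict_iff' measurableSet_Ioi).2 (ae_of_all _ fun t ht => ?_)
  have ht0 : (0:ℝ) < t := ht
  have h1 : (1:ℝ) ≤ 1 + Real.exp (-t) := le_add_of_nonneg_right (Real.exp_pos _).le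
  have hA : (0:ℝ) ≤ t ^ n * Real.exp (-(x * t) / k) := by positivity
  rw [Real.norm_eq_abs, abs_of_nonneg (by positivity), show -(x / k * t) = -(x * t) / k by ring]
  exact div_le_self hA h1

lemma hasDerivAt_Fk {k : ℝ} (hk : 0 < k) (n : ℕ) {x : ℝ} (hx : 0 < x) :
    HasDerivAt (Fk k n) (-(1/k) * Fk k (n+1) x) x := by
  have key := hasDerivAt_integral_of_dominated_loc_of_deriv_le
    (μ := volume.restrict (Set.Ioi (0:ℝ)))
    (F := fun y t => t ^ n * Real.exp (-(y * t) / k) / (1 + Real.exp (-t)))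
    (F' := fun y t => t ^ n * (Real.exp (-(y * t) / k) * -(t / k)) / (1 + Real.exp (-t)))
    (x₀ := x) (s := Metric.ball x (x/2))
    (bound := fun t => (1/k) * (t ^ (n+1) * Real.exp (-(x/(2*k) * t))))
    (Metric.ball_mem_nhds x (half_pos hx))
    (Eventually.of_forall fun y => ((cont_aux n y k).aestronglyMeasurable).restrict)
    (intg_Fk hk n hx)
    (Continuous.aestronglyMeasurable (by
      refine Continuous.div (by fun_prop) (by fun_prop) fun t => ?_
      positivity) |>.restrict)
    ?_ ?_ ?_
  · have hval : (∫ t in Set.Ioi (0:ℝ),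
        t ^ n * (Real.exp (-(x * t) / k) * -(t / k)) / (1 + Real.exp (-t)))
        = -(1/k) * Fk k (n+1) x := by
      rw [Fk, ← MeasureTheory.integral_const_mul]
      exact setIntegral_congr_fun measurableSet_Ioi fun t ht => by
        field_simp
        ring
    have := key.2
    rw [hval] at this
    exact this
  · -- bound
    refine (ae_restrict_iff' measurableSet_Ioi).2 (ae_of_all _ fun t ht => fun y hy => ?_)
    have ht0 : (0:ℝ) < t := ht
    have hy2 : x/2 < y := by
      have := abs_lt.1 (by simpa [Real.dist_eq] using hy)
      linarith [this.1]
    have hc : (0:ℝ) < 1 + Real.exp (-t) := by positivity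
    have h1c : (1:ℝ) ≤ 1 + Real.exp (-t) := le_add_of_nonneg_right (Real.exp_pos _).le
    have hee : Real.exp (-(y * t) / k) ≤ Real.exp (-(x/(2*k) * t)) := by
      apply Real.exp_le_exp.2
      rw [div_le_iff₀ hk]
      have h2 : -(x / (2 * k) * t) * k = -(x/2 * t) := by field_simp
      rw [h2]
      nlinarith
    have hnorm : ‖t ^ n * (Real.exp (-(y * t) / k) * -(t / k)) / (1 + Real.exp (-t))‖
        = t ^ n * (Real.exp (-(y * t) / k) * (t / k)) / (1 + Real.exp (-t)) := by
      rw [Real.norm_eq_abs, abs_div, abs_of_pos hc, abs_of_nonpos (by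
        rw [mul_neg, mul_neg, neg_nonpos]
        positivity)]
      ring
    rw [hnorm]
    calc t ^ n * (Real.exp (-(y * t) / k) * (t / k)) / (1 + Real.exp (-t))
        ≤ t ^ n * (Real.exp (-(y * t) / k) * (t / k)) := div_le_self (by positivity) h1c
      _ ≤ t ^ n * (Real.exp (-(x/(2*k) * t)) * (t / k)) := by gcongr
      _ = (1/k) * (t ^ (n+1) * Real.exp (-(x/(2*k) * t))) := by ring
  · -- bound integrable
    exact ((intg_pow_exp (b := x/(2*k)) (by positivity) (n+1)).const_mul (1/k))
  · -- differentiability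
    refine ae_of_all _ fun t => fun y hy => ?_
    have h1 : HasDerivAt (fun y : ℝ => -(y * t) / k) (-(t/k)) y := by
      simpa [neg_div] using (((hasDerivAt_id y).mul_const t).neg.div_const k)
    exact ((h1.exp).const_mul (t^n)).div_const _
lemma iteratedDeriv_pkBeta {p k : ℝ} (hk : 0 < k) (n : ℕ) :
    ∀ x ∈ Set.Ioi (0:ℝ), iteratedDeriv n (pkBeta p k) x
      = (p/k) * (-(1/k))^n * Fk k n x := by
  induction n with
  | zero =>
    intro x hx
    simp [iteratedDeriv_zero, pkBeta, Fk]
  | succ n ih =>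
    intro x hx
    rw [iteratedDeriv_succ]
    have hev : iteratedDeriv n (pkBeta p k)
        =ᶠ[nhds x] fun y => (p/k) * (-(1/k))^n * Fk k n y :=
      eventually_of_mem (isOpen_Ioi.mem_nhds hx) ih
    rw [hev.deriv_eq, (((hasDerivAt_Fk hk n hx)).const_mul ((p/k) * (-(1/k))^n)).deriv]
    ring
lemma intg_G {k : ℝ} (hk : 0 < k) (n : ℕ) {x : ℝ} (hx : 0 < x) :
    IntegrableOn
      (fun t : ℝ => t ^ n * Real.exp (-(x * t) / k) * Real.exp (-t) / (1 + Real.exp (-t)))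
      (Set.Ioi 0) := by
    refine (intg_pow_exp (b := x / k) (by positivity) n).mono'
      ((Continuous.div (by fun_prop) (by fun_prop) fun t => by
        positivity).aestronglyMeasurable.restrict) ?_
    refine (ae_restrict_iff' measurableSet_Ioi).2 (ae_of_all _ fun t ht => ?_)
    have ht0 : (0:ℝ) < t := ht
    have h1c : (1:ℝ) ≤ 1 + Real.exp (-t) := le_add_of_nonneg_right (Real.exp_pos _).le
    rw [Real.norm_eq_abs, abs_of_nonneg (by positivity)]
    calc t ^ n * Real.exp (-(x * t) / k) * Real.exp (-t) / (1 + Real.exp (-t))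
        ≤ t ^ n * Real.exp (-(x * t) / k) * Real.exp (-t) := div_le_self (by positivity) h1c
      _ ≤ t ^ n * Real.exp (-(x * t) / k) * 1 := by
          gcongr
          exact Real.exp_le_one_iff.2 (by linarith)
      _ = t ^ n * Real.exp (-(x / k * t)) := by rw [mul_one, show -(x/k*t) = -(x*t)/k by ring]

lemma T_eq {p k : ℝ} (hp : 0 < p) (hk : 0 < k) (n : ℕ) {x : ℝ} (hx : 0 < x) :
    x ^ (n + 1) / (n.factorial : ℝ) *
        ((-1 : ℝ) ^ n * iteratedDeriv n (pkBeta p k) x)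
      = p - p * x^(n+1) / ((n.factorial : ℝ) * k^(n+1)) *
          ∫ t in Set.Ioi (0:ℝ),
            t ^ n * Real.exp (-(x * t) / k) * Real.exp (-t) / (1 + Real.exp (-t)) := by
  have hG_int := intg_G hk n hx
  have hsplit : Fk k n x = (∫ t in Set.Ioi (0:ℝ), t ^ n * Real.exp (-(x / k * t)))
      - ∫ t in Set.Ioi (0:ℝ),
          t ^ n * Real.exp (-(x * t) / k) * Real.exp (-t) / (1 + Real.exp (-t)) := by
    rw [Fk, ← integral_sub (intg_pow_exp (by positivity) n) hG_int]
    refine setIntegral_congr_fun measurableSet_Ioi fun t ht => ?_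
    have h1 : (0:ℝ) < 1 + Real.exp (-t) := by positivity
    rw [show -(x/k*t) = -(x*t)/k by ring]
    field_simp
    ring
  rw [iteratedDeriv_pkBeta hk n x hx, hsplit, integral_pow_exp (by positivity) n]
  have hkn : (k:ℝ)^(n+1) ≠ 0 := by positivity
  have hxn : (x:ℝ)^(n+1) ≠ 0 := by positivity
  have hfn : ((n.factorial : ℝ)) ≠ 0 := by positivity
  have hxk : (x/k)^(n+1) = x^(n+1)/k^(n+1) := div_pow x k (n+1)
  have hneg : ((-1:ℝ))^n * ((p/k) * (-(1/k))^n) = p / k^(n+1) := by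
    rw [← mul_assoc, show ((-1:ℝ))^n * (p/k) = (p/k) * (-1:ℝ)^n by ring, mul_assoc,
      ← mul_pow]
    simp [pow_succ]
    ring
  have hstep : ∀ D : ℝ, (-1:ℝ)^n * ((p/k) * (-(1/k))^n * D) = p / k^(n+1) * D :=
    fun D => by rw [← mul_assoc, hneg]
  rw [hxk, hstep]
  field_simp

lemma G_le {k : ℝ} (hk : 0 < k) (n : ℕ) {x : ℝ} (hx : 0 < x) :
    (∫ t in Set.Ioi (0:ℝ),
        t ^ n * Real.exp (-(x * t) / k) * Real.exp (-t) / (1 + Real.exp (-t)))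
      ≤ (n.factorial : ℝ) * k^(n+1) / (x+k)^(n+1) := by
  have hb : (0:ℝ) < (x+k)/k := by positivity
  have hle : (∫ t in Set.Ioi (0:ℝ),
      t ^ n * Real.exp (-(x * t) / k) * Real.exp (-t) / (1 + Real.exp (-t)))
      ≤ ∫ t in Set.Ioi (0:ℝ), t ^ n * Real.exp (-((x+k)/k * t)) := by
    refine setIntegral_mono_on (intg_G hk n hx) (intg_pow_exp hb n) measurableSet_Ioi
      fun t ht => ?_
    have ht0 : (0:ℝ) < t := ht
    have h1c : (1:ℝ) ≤ 1 + Real.exp (-t) := le_add_of_nonneg_right (Real.exp_pos _).le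
    calc t ^ n * Real.exp (-(x * t) / k) * Real.exp (-t) / (1 + Real.exp (-t))
        ≤ t ^ n * Real.exp (-(x * t) / k) * Real.exp (-t) := div_le_self (by positivity) h1c
      _ = t ^ n * Real.exp (-((x+k)/k * t)) := by
          rw [mul_assoc, ← Real.exp_add, show -(x*t)/k + -t = -((x+k)/k * t) by
            field_simp; ring]
  rw [integral_pow_exp hb n] at hle
  have : ((x+k)/k)^(n+1) = (x+k)^(n+1)/k^(n+1) := div_pow _ _ _
  rw [this, div_div_eq_mul_div] at hle
  exact hle

lemma G_nonneg {k : ℝ} (n : ℕ) (x : ℝ) :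
    0 ≤ ∫ t in Set.Ioi (0:ℝ),
        t ^ n * Real.exp (-(x * t) / k) * Real.exp (-t) / (1 + Real.exp (-t)) := by
  refine setIntegral_nonneg measurableSet_Ioi fun t ht => ?_
  have ht0 : (0:ℝ) < t := ht
  positivity

theorem pkBeta_Delta_limit (p k : ℝ) (hp : 0 < p) (hk : 0 < k) (n : ℕ) :
    Tendsto (fun x : ℝ => x ^ (n + 1) / (n.factorial : ℝ) *
        ((-1 : ℝ) ^ n * iteratedDeriv n (pkBeta p k) x))
      (nhdsWithin 0 (Set.Ioi 0)) (nhds p) := by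
  have hfn : (0:ℝ) < (n.factorial : ℝ) := by positivity
  have hlow : Tendsto (fun x : ℝ => p - p * x^(n+1)/(x+k)^(n+1))
      (nhdsWithin 0 (Set.Ioi 0)) (nhds p) := by
    have hc : ContinuousAt (fun x : ℝ => p - p * x^(n+1)/(x+k)^(n+1)) 0 := by
      refine ContinuousAt.sub continuousAt_const
        (ContinuousAt.div (by fun_prop) (by fun_prop) ?_)
      positivity
    have h0 := hc.tendsto.mono_left (nhdsWithin_le_nhds (s := Set.Ioi (0:ℝ)))
    simpa using h0
  refine tendsto_of_tendsto_of_tendsto_of_le_of_le' hlow tendsto_const_nhds ?_ ?_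
  · refine eventually_nhdsWithin_of_forall fun x hx => ?_
    have hx0 : (0:ℝ) < x := hx
    rw [T_eq hp hk n hx0]
    have hGle := G_le hk n hx0
    have hc0 : (0:ℝ) ≤ p * x^(n+1) / ((n.factorial : ℝ) * k^(n+1)) := by positivity
    have h1 := mul_le_mul_of_nonneg_left hGle hc0
    have h2 : p * x^(n+1) / ((n.factorial : ℝ) * k^(n+1))
        * ((n.factorial : ℝ) * k^(n+1) / (x+k)^(n+1)) = p * x^(n+1)/(x+k)^(n+1) := by
      field_simp
    linarith
  · refine eventually_nhdsWithin_of_forall fun x hx => ?_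
    have hx0 : (0:ℝ) < x := hx
    rw [T_eq hp hk n hx0]
    have hGnn := G_nonneg (k := k) n x
    have hc0 : (0:ℝ) ≤ p * x^(n+1) / ((n.factorial : ℝ) * k^(n+1)) := by positivity
    nlinarith
end

section
/- For n ∈ ℕ₀, x > 0, y ≥ 1, and p, k > 0, the inequality |ₚβₖ⁽ⁿ⁾(xy)| < |ₚβₖ⁽ⁿ⁾(x)| + |ₚβₖ⁽ⁿ⁾(y)| holds, where |ₚβₖ⁽ⁿ⁾(x)| = (−1)ⁿ ₚβₖ⁽ⁿ⁾(x). -/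
open MeasureTheory Real

section aux
open Set

noncomputable def pkG (k : ℝ) (n : ℕ) (x : ℝ) : ℝ :=
  ∫ t in Set.Ioi (0:ℝ), t ^ n * Real.exp (-(x * t) / k) / (1 + Real.exp (-t))

lemma pkG_cont (c : ℝ) (n : ℕ) :
    Continuous (fun t : ℝ => t ^ n * Real.exp (-(c * t)) / (1 + Real.exp (-t))) := by
  apply Continuous.div
  · exact (continuous_pow n).mul (Real.continuous_exp.comp (by continuity))
  · exact continuous_const.add (Real.continuous_exp.comp continuous_neg)
  · intro t; positivity

lemma pkG_integrand_eq (k x : ℝ) (t : ℝ) :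
    t ^ n * Real.exp (-(x * t) / k) / (1 + Real.exp (-t))
      = t ^ n * Real.exp (-((x/k) * t)) / (1 + Real.exp (-t)) := by
  ring_nf

lemma pow_exp_integrable {c : ℝ} (hc : 0 < c) (n : ℕ) :
    IntegrableOn (fun t : ℝ => t ^ n * Real.exp (-(c * t))) (Set.Ioi (0:ℝ)) := by
  have := integrableOn_rpow_mul_exp_neg_mul_rpow (p := 1) (s := (n:ℝ)) (b := c)
    (lt_of_lt_of_le (by norm_num) (Nat.cast_nonneg n)) one_pos hc
  refine this.congr_fun (fun t ht => ?_) measurableSet_Ioi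
  beta_reduce
  rw [Real.rpow_natCast, Real.rpow_one]
  ring_nf

lemma pkG_integrable {k x : ℝ} (hk : 0 < k) (hx : 0 < x) (n : ℕ) :
    IntegrableOn (fun t => t ^ n * Real.exp (-(x * t) / k) / (1 + Real.exp (-t)))
      (Set.Ioi (0:ℝ)) := by
  refine (pow_exp_integrable (c := x/k) (by positivity) n).mono' ?_ ?_
  · exact ((pkG_cont (x/k) n).congr
      (fun t => (pkG_integrand_eq k x t).symm)).aestronglyMeasurable
  · filter_upwards [self_mem_ae_restrict measurableSet_Ioi] with t ht
    have ht0 : (0:ℝ) < t := ht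
    have h1 : (1:ℝ) ≤ 1 + Real.exp (-t) := by linarith [Real.exp_pos (-t)]
    have hnum : (0:ℝ) ≤ t ^ n * Real.exp (-(x * t) / k) := by positivity
    rw [Real.norm_of_nonneg (by positivity)]
    calc t ^ n * Real.exp (-(x * t) / k) / (1 + Real.exp (-t))
        ≤ t ^ n * Real.exp (-(x * t) / k) / 1 :=
          div_le_div_of_nonneg_left hnum one_pos h1
      _ = t ^ n * Real.exp (-(x/k * t)) := by rw [div_one]; ring_nf

lemma pkG_cont' (k x : ℝ) (n : ℕ) :
    Continuous (fun t : ℝ => t ^ n * Real.exp (-(x * t) / k) / (1 + Real.exp (-t))) :=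
  (pkG_cont (x/k) n).congr (fun t => (pkG_integrand_eq k x t).symm)

lemma pkG_pos {k x : ℝ} (hk : 0 < k) (hx : 0 < x) (n : ℕ) : 0 < pkG k n x := by
  rw [pkG, setIntegral_pos_iff_support_of_nonneg_ae]
  · have hsub : Set.Ioi (0:ℝ) ⊆ Function.support
        (fun t => t ^ n * Real.exp (-(x * t) / k) / (1 + Real.exp (-t))) ∩ Set.Ioi 0 := by
      intro t ht
      refine ⟨?_, ht⟩
      have ht0 : (0:ℝ) < t := ht
      have : (0:ℝ) < t ^ n * Real.exp (-(x * t) / k) / (1 + Real.exp (-t)) := by positivity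
      exact ne_of_gt this
    refine lt_of_lt_of_le ?_ (measure_mono hsub)
    simp
  · filter_upwards [self_mem_ae_restrict measurableSet_Ioi] with t ht
    have ht0 : (0:ℝ) < t := ht
    positivity
  · exact pkG_integrable hk hx n

lemma pkG_mono {k x x' : ℝ} (hk : 0 < k) (hx : 0 < x) (hxx : x ≤ x') (n : ℕ) :
    pkG k n x' ≤ pkG k n x := by
  refine setIntegral_mono_on (pkG_integrable hk (hx.trans_le hxx) n)
    (pkG_integrable hk hx n) measurableSet_Ioi (fun t ht => ?_)
  have ht0 : (0:ℝ) < t := ht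
  have hD : (0:ℝ) < 1 + Real.exp (-t) := by positivity
  have hexp : Real.exp (-(x' * t) / k) ≤ Real.exp (-(x * t) / k) := by
    apply Real.exp_le_exp.mpr
    rw [neg_div, neg_div, neg_le_neg_iff, div_le_div_iff_of_pos_right hk]
    exact mul_le_mul_of_nonneg_right hxx ht0.le
  gcongr


set_option maxHeartbeats 1000000 in
lemma pkG_hasDerivAt {k x : ℝ} (hk : 0 < k) (hx : 0 < x) (n : ℕ) :
    HasDerivAt (pkG k n) (-(1/k) * pkG k (n+1) x) x := by
  let μ := volume.restrict (Set.Ioi (0:ℝ))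
  let F : ℝ → ℝ → ℝ := fun x t => t ^ n * Real.exp (-(x * t) / k) / (1 + Real.exp (-t))
  let F' : ℝ → ℝ → ℝ :=
    fun x t => (-(1/k)) * (t ^ (n+1) * Real.exp (-(x * t) / k) / (1 + Real.exp (-t)))
  let bound : ℝ → ℝ := fun t => (1/k) * (t ^ (n+1) * Real.exp (-(x/(2*k) * t)))
  have hF_meas : ∀ᶠ z in nhds x, AEStronglyMeasurable (F z) μ :=
    Filter.Eventually.of_forall (fun z => (pkG_cont' k z n).aestronglyMeasurable)
  have hF_int : Integrable (F x) μ := pkG_integrable hk hx n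
  have hF'_meas : AEStronglyMeasurable (F' x) μ :=
    (continuous_const.mul (pkG_cont' k x (n+1))).aestronglyMeasurable
  have h_bound : ∀ᵐ t ∂μ, ∀ z ∈ Metric.ball x (x/2), ‖F' z t‖ ≤ bound t := by
    filter_upwards [self_mem_ae_restrict measurableSet_Ioi] with t ht z hz
    have ht0 : (0:ℝ) < t := ht
    have hz2 : x/2 < z := by
      rw [Metric.mem_ball, Real.dist_eq, abs_lt] at hz
      linarith [hz.1]
    have hD : (1:ℝ) ≤ 1 + Real.exp (-t) := by linarith [Real.exp_pos (-t)]
    have hnn : (0:ℝ) ≤ t ^ (n+1) * Real.exp (-(z * t) / k) / (1 + Real.exp (-t)) := by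
      positivity
    show ‖(-(1/k)) * (t ^ (n+1) * Real.exp (-(z * t) / k) / (1 + Real.exp (-t)))‖ ≤ _
    rw [norm_mul, norm_neg, Real.norm_of_nonneg (by positivity : (0:ℝ) ≤ 1/k),
      Real.norm_of_nonneg hnn]
    have hstep : t ^ (n+1) * Real.exp (-(z * t) / k) / (1 + Real.exp (-t))
        ≤ t ^ (n+1) * Real.exp (-(x/(2*k) * t)) := by
      calc t ^ (n+1) * Real.exp (-(z * t) / k) / (1 + Real.exp (-t))
          ≤ t ^ (n+1) * Real.exp (-(z * t) / k) / 1 :=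
            div_le_div_of_nonneg_left (by positivity) one_pos hD
        _ = t ^ (n+1) * Real.exp (-(z * t) / k) := div_one _
        _ ≤ t ^ (n+1) * Real.exp (-(x/(2*k) * t)) := by
            gcongr
            rw [neg_div, neg_le_neg_iff, div_mul_eq_mul_div,
              div_le_div_iff₀ (by positivity) hk]
            nlinarith [mul_pos ht0 hk]
    exact mul_le_mul_of_nonneg_left hstep (by positivity)
  have hbi : Integrable bound μ :=
    (pow_exp_integrable (c := x/(2*k)) (by positivity) (n+1)).const_mul (1/k)
  have h_diff : ∀ᵐ t ∂μ, ∀ z ∈ Metric.ball x (x/2), HasDerivAt (F · t) (F' z t) z := by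
    filter_upwards [self_mem_ae_restrict measurableSet_Ioi] with t ht z hz
    have h1 : HasDerivAt (fun w : ℝ => -(w * t) / k) (-(t/k)) z := by
      simpa [neg_div, mul_neg] using ((hasDerivAt_id z).mul_const (-t)).div_const k
    have h2 : HasDerivAt (fun w : ℝ => Real.exp (-(w * t) / k))
        (Real.exp (-(z * t) / k) * (-(t/k))) z := h1.exp
    have h3 := (h2.const_mul (t ^ n)).div_const (1 + Real.exp (-t))
    have heq : t ^ n * (Real.exp (-(z * t) / k) * (-(t/k))) / (1 + Real.exp (-t))
        = -(1/k) * (t ^ (n+1) * Real.exp (-(z * t) / k) / (1 + Real.exp (-t))) := by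
      rw [pow_succ]; ring
    show HasDerivAt (fun w : ℝ => t ^ n * Real.exp (-(w * t) / k) / (1 + Real.exp (-t)))
      (-(1/k) * (t ^ (n+1) * Real.exp (-(z * t) / k) / (1 + Real.exp (-t)))) z
    rw [← heq]
    exact h3
  obtain ⟨-, key⟩ := hasDerivAt_integral_of_dominated_loc_of_deriv_le (F := F) (F' := F')
    (Metric.ball_mem_nhds x (half_pos hx)) hF_meas hF_int hF'_meas h_bound hbi h_diff
  have hInt : (∫ t, F' x t ∂μ) = -(1/k) * pkG k (n+1) x := by
    show (∫ t in Set.Ioi (0:ℝ),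
        (-(1/k)) * (t ^ (n+1) * Real.exp (-(x * t) / k) / (1 + Real.exp (-t)))) = _
    rw [pkG, ← smul_eq_mul, ← integral_smul]
    simp [smul_eq_mul]
  rw [hInt] at key
  exact key


lemma pkBeta_formula {p k : ℝ} (hk : 0 < k) (n : ℕ) :
    ∀ x ∈ Set.Ioi (0:ℝ),
      iteratedDeriv n (pkBeta p k) x = (-1)^n * (p / k^(n+1)) * pkG k n x := by
  induction n with
  | zero =>
    intro x hx
    rw [iteratedDeriv_zero, pkBeta, pkG]
    simp only [pow_zero, one_mul, pow_one]
    norm_num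
  | succ n ih =>
    intro x hx
    have hx' : (0:ℝ) < x := hx
    rw [iteratedDeriv_succ]
    have hev : iteratedDeriv n (pkBeta p k)
        =ᶠ[nhds x] fun z => (-1)^n * (p / k^(n+1)) * pkG k n z := by
      filter_upwards [isOpen_Ioi.mem_nhds hx] with z hz using ih z hz
    rw [hev.deriv_eq,
      (((pkG_hasDerivAt hk hx' n).const_mul ((-1:ℝ)^n * (p / k^(n+1))))).deriv]
    have hkne : (k:ℝ) ≠ 0 := hk.ne'
    field_simp [pow_succ]
    ring

end aux

theorem pkBeta_abs_deriv_mul_ineq (p k x y : ℝ) (hp : 0 < p) (hk : 0 < k)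
    (hx : 0 < x) (hy : 1 ≤ y) (n : ℕ) :
    (-1 : ℝ) ^ n * iteratedDeriv n (pkBeta p k) (x * y) <
      (-1 : ℝ) ^ n * iteratedDeriv n (pkBeta p k) x +
        (-1 : ℝ) ^ n * iteratedDeriv n (pkBeta p k) y := by
  have hy0 : (0:ℝ) < y := lt_of_lt_of_le one_pos hy
  have hxy : (0:ℝ) < x * y := mul_pos hx hy0
  rw [pkBeta_formula hk n (x*y) hxy, pkBeta_formula hk n x hx, pkBeta_formula hk n y hy0]
  have hone : ((-1:ℝ)^n) * ((-1:ℝ)^n) = 1 := by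
    rw [← pow_add]
    exact Even.neg_one_pow ⟨n, rfl⟩
  have hC : (0:ℝ) < p / k^(n+1) := by positivity
  have hmono : pkG k n (x*y) ≤ pkG k n x :=
    pkG_mono hk hx (le_mul_of_one_le_right hx.le hy) n
  have hposy : 0 < pkG k n y := pkG_pos hk hy0 n
  calc (-1:ℝ)^n * ((-1:ℝ)^n * (p / k^(n+1)) * pkG k n (x*y))
      = (p / k^(n+1)) * pkG k n (x*y) := by rw [← mul_assoc, ← mul_assoc, hone, one_mul]
    _ ≤ (p / k^(n+1)) * pkG k n x := by gcongr
    _ < (p / k^(n+1)) * pkG k n x + (p / k^(n+1)) * pkG k n y := by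
        nlinarith [mul_pos hC hposy]
    _ = (-1:ℝ)^n * ((-1:ℝ)^n * (p / k^(n+1)) * pkG k n x)
        + (-1:ℝ)^n * ((-1:ℝ)^n * (p / k^(n+1)) * pkG k n y) := by
        rw [← mul_assoc, ← mul_assoc, ← mul_assoc, ← mul_assoc, hone, one_mul]
end

section
/- For n ∈ ℕ₀, x > 0, a ≥ 1, and p, k > 0, the inequality |ₚβₖ⁽ⁿ⁾(ax)| ≤ a · |ₚβₖ⁽ⁿ⁾(x)| holds; if 0 < a ≤ 1 the inequality reverses. Here |ₚβₖ⁽ⁿ⁾(x)| = (−1)ⁿ ₚβₖ⁽ⁿ⁾(x). -/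
open MeasureTheory Real

noncomputable def pkF (k : ℝ) (n : ℕ) (y : ℝ) : ℝ :=
  ∫ t in Set.Ioi (0:ℝ), t ^ n * Real.exp (-(y * t) / k) / (1 + Real.exp (-t))

lemma pkF_cont (k : ℝ) (n : ℕ) (y : ℝ) :
    Continuous (fun t : ℝ => t ^ n * Real.exp (-(y * t) / k) / (1 + Real.exp (-t))) := by
  apply Continuous.div
  · fun_prop
  · fun_prop
  · intro t
    positivity

lemma pkF_integrable {k : ℝ} (hk : 0 < k) (n : ℕ) {y : ℝ} (hy : 0 < y) :
    IntegrableOn (fun t : ℝ => t ^ n * Real.exp (-(y * t) / k) / (1 + Real.exp (-t)))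
      (Set.Ioi (0:ℝ)) := by
  have hg : IntegrableOn (fun t : ℝ => t ^ n * Real.exp (-(y / k) * t)) (Set.Ioi (0:ℝ)) := by
    have := integrableOn_rpow_mul_exp_neg_mul_rpow (p := 1) (s := (n : ℝ)) (b := y / k)
      (by exact_mod_cast neg_one_lt_zero.trans_le (Nat.cast_nonneg n)) one_pos
      (div_pos hy hk)
    simpa [Real.rpow_natCast, Real.rpow_one] using this
  refine hg.mono' ((pkF_cont k n y).aestronglyMeasurable.restrict) ?_
  filter_upwards [ae_restrict_mem measurableSet_Ioi] with t ht
  have ht0 : (0:ℝ) < t := ht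
  have h1 : (1:ℝ) ≤ 1 + Real.exp (-t) := by linarith [Real.exp_pos (-t)]
  have hnum : (0:ℝ) ≤ t ^ n * Real.exp (-(y * t) / k) :=
    mul_nonneg (pow_nonneg ht0.le n) (Real.exp_nonneg _)
  rw [Real.norm_eq_abs, abs_of_nonneg (div_nonneg hnum (by positivity))]
  calc t ^ n * Real.exp (-(y * t) / k) / (1 + Real.exp (-t))
      ≤ t ^ n * Real.exp (-(y * t) / k) / 1 := by
        apply div_le_div_of_nonneg_left hnum one_pos h1 |>.trans_eq rfl
    _ = t ^ n * Real.exp (-(y / k) * t) := by rw [div_one]; ring_nf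

lemma pkF_hasDerivAt {k : ℝ} (hk : 0 < k) (n : ℕ) {y : ℝ} (hy : 0 < y) :
    HasDerivAt (pkF k n) (-(1/k) * pkF k (n+1) y) y := by
  have key := hasDerivAt_integral_of_dominated_loc_of_deriv_le
    (μ := volume.restrict (Set.Ioi (0:ℝ))) (x₀ := y) (s := Metric.ball y (y / 2))
    (F := fun x t => t ^ n * Real.exp (-(x * t) / k) / (1 + Real.exp (-t)))
    (F' := fun x t => -(1/k) * (t ^ (n+1) * Real.exp (-(x * t) / k) / (1 + Real.exp (-t))))
    (bound := fun t => (1/k) * (t ^ (n+1) * Real.exp (-((y/2) * t) / k) / (1 + Real.exp (-t))))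
    (Metric.ball_mem_nhds y (half_pos hy))
    (Filter.Eventually.of_forall fun x => (pkF_cont k n x).aestronglyMeasurable.restrict)
    (pkF_integrable hk n hy)
    ((continuous_const.mul (pkF_cont k (n+1) y)).aestronglyMeasurable.restrict)
    ?_ ?_ ?_
  · have : (∫ t in Set.Ioi (0:ℝ),
        -(1/k) * (t ^ (n+1) * Real.exp (-(y * t) / k) / (1 + Real.exp (-t))))
        = -(1/k) * pkF k (n+1) y := by
      rw [pkF, MeasureTheory.integral_const_mul]
    rw [← this]
    exact key.2
  · filter_upwards [ae_restrict_mem measurableSet_Ioi] with t ht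
    intro x hx
    have ht0 : (0:ℝ) < t := ht
    have hx0 : y / 2 ≤ x := by
      have := abs_lt.mp (mem_ball_iff_norm.mp hx)
      linarith [this.1]
    have h1 : (1:ℝ) ≤ 1 + Real.exp (-t) := by linarith [Real.exp_pos (-t)]
    have hexp : Real.exp (-(x * t) / k) ≤ Real.exp (-((y/2) * t) / k) := by
      apply Real.exp_le_exp.mpr
      rw [div_le_div_iff_of_pos_right hk]
      nlinarith
    have htn : (0:ℝ) ≤ t ^ (n+1) := pow_nonneg ht0.le _
    rw [norm_mul, Real.norm_eq_abs, Real.norm_eq_abs,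
      abs_of_nonneg (div_nonneg (mul_nonneg htn (Real.exp_nonneg _)) (by positivity))]
    have habs : |(-(1/k) : ℝ)| = 1/k := by
      rw [abs_neg, abs_of_nonneg (by positivity)]
    rw [habs]
    apply mul_le_mul_of_nonneg_left ?_ (by positivity)
    gcongr
  · exact ((pkF_integrable hk (n+1) (half_pos hy)).const_mul _)
  · filter_upwards [ae_restrict_mem measurableSet_Ioi] with t ht
    intro x hx
    have hd : HasDerivAt (fun x : ℝ => -(x * t) / k) (-t/k) x := by
      have : HasDerivAt (fun x : ℝ => -(x * t) / k) ((-(1 * t)) / k) x :=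
        (((hasDerivAt_id x).mul_const t).neg).div_const k
      simpa using this
    have := (((hd.exp).const_mul (t ^ n)).div_const (1 + Real.exp (-t)))
    convert this using 1
    · rfl
    rw [pow_succ]
    ring

lemma pkBeta_iteratedDeriv {p k : ℝ} (hp : 0 < p) (hk : 0 < k) (n : ℕ) :
    ∀ y : ℝ, 0 < y →
      iteratedDeriv n (pkBeta p k) y = (p / k) * (-(1/k)) ^ n * pkF k n y := by
  induction n with
  | zero =>
    intro y hy
    simp [iteratedDeriv_zero, pkBeta, pkF]
  | succ n ih =>
    intro y hy
    rw [iteratedDeriv_succ]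
    have hev : iteratedDeriv n (pkBeta p k) =ᶠ[nhds y]
        fun z => (p / k) * (-(1/k)) ^ n * pkF k n z := by
      filter_upwards [IsOpen.mem_nhds isOpen_Ioi (Set.mem_Ioi.mpr hy)] with z hz
      exact ih z hz
    rw [hev.deriv_eq]
    have := ((pkF_hasDerivAt hk n hy).const_mul ((p / k) * (-(1/k)) ^ n)).deriv
    rw [this, pow_succ]
    ring

theorem pkBeta_abs_deriv_scale (p k x a : ℝ) (hp : 0 < p) (hk : 0 < k)
    (hx : 0 < x) (ha : 0 < a) (n : ℕ) :
    (1 ≤ a →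
      (-1 : ℝ) ^ n * iteratedDeriv n (pkBeta p k) (a * x) ≤
        a * ((-1 : ℝ) ^ n * iteratedDeriv n (pkBeta p k) x)) ∧
    (a ≤ 1 →
      a * ((-1 : ℝ) ^ n * iteratedDeriv n (pkBeta p k) x) ≤
        (-1 : ℝ) ^ n * iteratedDeriv n (pkBeta p k) (a * x)) := by
  have hax : 0 < a * x := mul_pos ha hx
  have hrw : ∀ y : ℝ, 0 < y → (-1 : ℝ) ^ n * iteratedDeriv n (pkBeta p k) y
      = (p / k) * (1/k) ^ n * pkF k n y := by
    intro y hy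
    rw [pkBeta_iteratedDeriv hp hk n y hy]
    rw [show ((-1 : ℝ)) ^ n * ((p / k) * (-(1/k)) ^ n * pkF k n y)
        = (p / k) * ((-1 : ℝ) * -(1/k)) ^ n * pkF k n y by rw [mul_pow]; ring]
    norm_num
  have hC : (0:ℝ) ≤ (p / k) * (1/k) ^ n := by positivity
  have hnonneg : ∀ y : ℝ, 0 < y → 0 ≤ pkF k n y := by
    intro y hy
    apply setIntegral_nonneg measurableSet_Ioi
    intro t ht
    have ht0 : (0:ℝ) < t := ht
    have := Real.exp_pos (-t)
    positivity
  have hmono : ∀ y z : ℝ, 0 < y → y ≤ z → pkF k n z ≤ pkF k n y := by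
    intro y z hy hyz
    apply setIntegral_mono_on (pkF_integrable hk n (hy.trans_le hyz))
      (pkF_integrable hk n hy) measurableSet_Ioi
    intro t ht
    have ht0 : (0:ℝ) < t := ht
    have hee : Real.exp (-(z * t) / k) ≤ Real.exp (-(y * t) / k) := by
      rw [Real.exp_le_exp, div_le_div_iff_of_pos_right hk]
      nlinarith
    gcongr
  rw [hrw _ hax, hrw _ hx]
  constructor
  · intro h1
    calc (p / k) * (1/k) ^ n * pkF k n (a * x)
        ≤ (p / k) * (1/k) ^ n * pkF k n x :=
          mul_le_mul_of_nonneg_left (hmono x (a*x) hx (by nlinarith)) hC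
      _ ≤ a * ((p / k) * (1/k) ^ n * pkF k n x) := by
          nlinarith [mul_nonneg hC (hnonneg x hx)]
  · intro h1
    calc a * ((p / k) * (1/k) ^ n * pkF k n x)
        ≤ (p / k) * (1/k) ^ n * pkF k n x := by
          nlinarith [mul_nonneg hC (hnonneg x hx)]
      _ ≤ (p / k) * (1/k) ^ n * pkF k n (a * x) :=
          mul_le_mul_of_nonneg_left (hmono (a*x) x hax (by nlinarith)) hC
end
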